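/- Let c : (2πℤ)^d → ℝ be nonnegative and bounded with p ↦ c(p)² summable. For p ∈ (2πℤ)^d∖{0}, set A_p = |p|² + c(p), B_p = c(p), α_p = (A_p − √(A_p² − B_p²))/B_p if c(p) > 0 and α_p = 0 otherwise, and let β_p = (1/2)·artanh(α_p). Then the family p ↦ |p|⁴·β_p², indexed by p ∈ (2πℤ)^d∖{0}, is summable; in particular p ↦ β_p² is summable. -/

import Mathlib

open Real

noncomputable section

/-- `|p|²` for the lattice point `p = 2πk ∈ (2πℤ)^d`. -/
def pSq (d : ℕ) (k : Fin d → ℤ) : ℝ := ∑ j, (2 * π * (k j : ℝ)) ^ 2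

/-- The inverse hyperbolic tangent, `artanh x = (1/2)·log((1+x)/(1-x))`. -/
def artanh (x : ℝ) : ℝ := (1 / 2) * Real.log ((1 + x) / (1 - x))

/-- The Bogoliubov coefficient `α_p = (A_p - √(A_p² - B_p²))/B_p` with
`A_p = |p|² + c(p)`, `B_p = c(p)`, and the convention `α_p = 0` if `c(p) = 0`. -/
def alphaCoef (d : ℕ) (c : (Fin d → ℤ) → ℝ) (k : Fin d → ℤ) : ℝ :=
  if 0 < c k then
    (pSq d k + c k - Real.sqrt ((pSq d k + c k) ^ 2 - (c k) ^ 2)) / c k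
  else 0

/-- `β_p = (1/2)·artanh(α_p)`. -/
def betaCoef (d : ℕ) (c : (Fin d → ℤ) → ℝ) (k : Fin d → ℤ) : ℝ :=
  (1 / 2) * _root_.artanh (alphaCoef d c k)

set_option maxHeartbeats 1000000 in
theorem statement11 (d : ℕ) (hd : 1 ≤ d) (c : (Fin d → ℤ) → ℝ)
    (hc : ∀ k, 0 ≤ c k) (hbdd : ∃ M : ℝ, ∀ k, c k ≤ M)
    (hsum : Summable fun k : Fin d → ℤ => (c k) ^ 2) :
    Summable (fun k : {k : Fin d → ℤ // k ≠ 0} =>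
        (pSq d k.1) ^ 2 * (betaCoef d c k.1) ^ 2) ∧
      Summable (fun k : {k : Fin d → ℤ // k ≠ 0} => (betaCoef d c k.1) ^ 2) := by
  obtain ⟨M, hM⟩ := hbdd
  set M' : ℝ := max M 1 with hM'def
  have hM1 : (1:ℝ) ≤ M' := le_max_right _ _
  have hcM : ∀ k, c k ≤ M' := fun k => (hM k).trans (le_max_left _ _)
  have hpi : (3:ℝ) < π := Real.pi_gt_three
  have hpSq_nonneg : ∀ k, 0 ≤ pSq d k := fun k =>
    Finset.sum_nonneg fun j _ => sq_nonneg _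
  have hpSq_one : ∀ k : Fin d → ℤ, k ≠ 0 → 1 ≤ pSq d k := by
    intro k hk
    obtain ⟨j, hj⟩ := Function.ne_iff.mp hk
    have h1 : (1:ℝ) ≤ ((k j : ℝ))^2 := by
      have : (1:ℤ) ≤ (k j)^2 := by
        have := Int.one_le_abs (by simpa using hj)
        nlinarith [sq_abs (k j)]
      exact_mod_cast this
    have h2pi : (1:ℝ) ≤ (2 * π)^2 := by nlinarith
    have h2 : (1:ℝ) ≤ (2 * π * (k j : ℝ))^2 := by
      have := mul_le_mul h2pi h1 zero_le_one (by positivity)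
      nlinarith
    refine h2.trans ?_
    simpa [pSq] using Finset.single_le_sum (f := fun i => (2 * π * (k i : ℝ))^2)
      (fun i _ => sq_nonneg _) (Finset.mem_univ j)
  -- key pointwise bound
  have key : ∀ k : Fin d → ℤ, k ≠ 0 →
      0 ≤ betaCoef d c k ∧ betaCoef d c k * pSq d k ≤ ((M' + 1) / 2) * c k := by
    intro k hk
    by_cases h : 0 < c k
    · set P := pSq d k with hP
      set B := c k with hB
      have hP1 : 1 ≤ P := hpSq_one k hk
      have hBM : B ≤ M' := hcM k
      have hA : (0:ℝ) < P + B := by linarith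
      have hD : (0:ℝ) ≤ (P + B)^2 - B^2 := by nlinarith
      have hsq : Real.sqrt ((P + B)^2 - B^2) ≤ P + B := by
        have := Real.sqrt_le_sqrt (show (P + B)^2 - B^2 ≤ (P + B)^2 by nlinarith)
        rwa [Real.sqrt_sq hA.le] at this
      have hsnn : 0 ≤ Real.sqrt ((P + B)^2 - B^2) := Real.sqrt_nonneg _
      have hss : Real.sqrt ((P + B)^2 - B^2) * Real.sqrt ((P + B)^2 - B^2)
          = (P + B)^2 - B^2 := Real.mul_self_sqrt hD
      have hα_def : alphaCoef d c k = (P + B - Real.sqrt ((P + B)^2 - B^2)) / B := if_pos h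
      set x := alphaCoef d c k with hx
      have hα0 : 0 ≤ x := by
        rw [hα_def]; exact div_nonneg (by linarith) h.le
      have hαle : x ≤ B / (P + B) := by
        rw [hα_def, div_le_div_iff₀ h hA]
        nlinarith [mul_le_mul_of_nonneg_right hsq hsnn]
      have hαr : x ≤ M' / (1 + M') := by
        refine hαle.trans ?_
        rw [div_le_div_iff₀ hA (by linarith)]
        nlinarith
      have hα1 : x < 1 := lt_of_le_of_lt hαr (by
        rw [div_lt_one (by linarith)]; linarith)
      have h1x : 0 < 1 - x := by linarith
      have hxP : x * P ≤ B := by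
        have hxAB : x * (P + B) ≤ B := by
          have := (le_div_iff₀ hA).mp hαle
          linarith
        nlinarith [mul_nonneg hα0 h.le]
      have hq : 0 < (1 + x) / (1 - x) := by positivity
      have hlog0 : 0 ≤ Real.log ((1 + x) / (1 - x)) := by
        apply Real.log_nonneg
        rw [le_div_iff₀ h1x]; linarith
      have hlog : Real.log ((1 + x) / (1 - x)) ≤ (1 + x) / (1 - x) - 1 :=
        Real.log_le_sub_one_of_pos hq
      have hfrac : (1 + x) / (1 - x) - 1 = 2 * x / (1 - x) := by
        field_simp
        ring
      have hkey : 1 ≤ (1 - x) * (1 + M') := by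
        have := (le_div_iff₀ (show (0:ℝ) < 1 + M' by linarith)).mp hαr
        nlinarith
      have hdiv : x / (1 - x) ≤ x * (1 + M') := by
        rw [div_le_iff₀ h1x]
        nlinarith [mul_nonneg hα0 (sub_nonneg.mpr hkey)]
      have hart_le : _root_.artanh x ≤ x / (1 - x) := by
        rw [_root_.artanh]
        calc (1/2 : ℝ) * Real.log ((1 + x) / (1 - x))
            ≤ (1/2) * ((1 + x) / (1 - x) - 1) := by linarith
          _ = (1/2) * (2 * x / (1 - x)) := by rw [hfrac]
          _ = x / (1 - x) := by ring
      have hβ0 : 0 ≤ betaCoef d c k := by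
        rw [betaCoef, ← hx, _root_.artanh]; positivity
      refine ⟨hβ0, ?_⟩
      have hβle : betaCoef d c k ≤ (1/2) * (x * (1 + M')) := by
        rw [betaCoef, ← hx]
        nlinarith [hart_le.trans hdiv]
      have hPpos : (0:ℝ) < P := by linarith
      nlinarith [mul_le_mul_of_nonneg_right hβle hPpos.le,
        mul_le_mul_of_nonneg_left hxP (show (0:ℝ) ≤ (1/2)*(1+M') by linarith)]
    · have hc0 : c k = 0 := le_antisymm (not_lt.mp h) (hc k)
      have hα : alphaCoef d c k = 0 := if_neg h
      have hβ : betaCoef d c k = 0 := by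
        simp [betaCoef, hα, _root_.artanh]
      exact ⟨by simp [hβ], by rw [hβ, hc0]; simp⟩
  have bound : ∀ k : {k : Fin d → ℤ // k ≠ 0},
      (pSq d k.1)^2 * (betaCoef d c k.1)^2 ≤ ((M' + 1)/2)^2 * (c k.1)^2 := by
    intro k
    obtain ⟨hβ0, hβP⟩ := key k.1 k.2
    have h1 := mul_self_le_mul_self (mul_nonneg hβ0 (hpSq_nonneg k.1)) hβP
    nlinarith
  have hS : Summable (fun k : {k : Fin d → ℤ // k ≠ 0} =>
      ((M' + 1)/2)^2 * (c k.1)^2) := (hsum.mul_left _).subtype _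
  have hfirst : Summable (fun k : {k : Fin d → ℤ // k ≠ 0} =>
      (pSq d k.1) ^ 2 * (betaCoef d c k.1) ^ 2) :=
    Summable.of_nonneg_of_le (fun k => by positivity) bound hS
  refine ⟨hfirst, Summable.of_nonneg_of_le (fun k => sq_nonneg _) (fun k => ?_) hfirst⟩
  have h1 := hpSq_one k.1 k.2
  nlinarith [sq_nonneg (betaCoef d c k.1),
    mul_le_mul h1 h1 zero_le_one (by linarith : (0:ℝ) ≤ pSq d k.1)]
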